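/- Let e₁, e₂ be idempotents in a finite semigroup whose R relation restricted to idempotent-generated stabilizer subsemigroups is trivial, and assume e₁e₂ is idempotent with e₁ >_R e₁e₂ and e₁e₂ ≤_L e₂, and additionally e₁e₂ = e₁e₂e₁ and e₂e₁ = e₂e₁e₂. If the L-order is unambiguous (i.e., for idempotents f, g, h with h ≤_L f and h ≤_L g, either f ≤_L g or g ≤_L f), then e₁e₂ ≡_L e₂ is forced; that is, the strict case e₁e₂ <_L e₂ leads to a contradiction. -/
import Mathlib


/-- Green's R-preorder: `a ≤_R b` iff `a S¹ ⊆ b S¹`. -/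
def rLe {S : Type*} [Semigroup S] (a b : S) : Prop := a = b ∨ ∃ x, a = b * x

/-- Green's L-preorder: `a ≤_L b` iff `S¹ a ⊆ S¹ b`. -/
def lLe {S : Type*} [Semigroup S] (a b : S) : Prop := a = b ∨ ∃ u, a = u * b

theorem stmt7 {S : Type*} [Semigroup S] [Fintype S]
    (e₁ e₂ : S) (h1 : e₁ * e₁ = e₁) (h2 : e₂ * e₂ = e₂)
    (h12 : (e₁ * e₂) * (e₁ * e₂) = e₁ * e₂)
    (hRstrict : rLe (e₁ * e₂) e₁ ∧ ¬ rLe e₁ (e₁ * e₂))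
    (hL : lLe (e₁ * e₂) e₂)
    (ha : e₁ * e₂ = e₁ * e₂ * e₁) (hb : e₂ * e₁ = e₂ * e₁ * e₂)
    (hunamb : ∀ f g h : S, f * f = f → g * g = g → h * h = h →
      lLe h f → lLe h g → (lLe f g ∨ lLe g f)) :
    lLe e₂ (e₁ * e₂) ∧ lLe (e₁ * e₂) e₂ := by

  refine ⟨?_, hL⟩
  -- e₂e₁ is idempotent
  have hidem : (e₂ * e₁) * (e₂ * e₁) = e₂ * e₁ := by
    calc (e₂ * e₁) * (e₂ * e₁) = (e₂ * e₁ * e₂) * e₁ := by rw [mul_assoc, mul_assoc, mul_assoc]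
    _ = (e₂ * e₁) * e₁ := by rw [← hb]
    _ = e₂ * e₁ := by rw [mul_assoc, h1]
  have hLf : lLe (e₂ * e₁) e₁ := Or.inr ⟨e₂, rfl⟩
  have hLg : lLe (e₂ * e₁) e₂ := Or.inr ⟨e₂ * e₁, hb⟩
  rcases hunamb e₁ e₂ (e₂ * e₁) h1 h2 hidem hLf hLg with hc | hc
  · exfalso
    apply hRstrict.2
    rcases hc with hc | ⟨u, hu⟩
    · left; rw [← hc, h1]
    · left; rw [hu, mul_assoc, h2]
  · have h21 : e₂ * e₁ = e₂ := by
      rcases hc with hc | ⟨u, hu⟩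
      · rw [hc, h1]
      · rw [hu, mul_assoc, h1]
    right; exact ⟨e₂, by rw [← mul_assoc, h21, h2]⟩
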